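/- Fix u, k, ω, σ > 0, and for λ > 0 define M(β; λ) := ½u²k [ sin(ωβ) exp(−½k²σ²(β + λ^{−1}(1 − e^{−λβ}))) − λ ∫₀^∞ exp(−λα − ½k²σ²(α + β + λ^{−1})) sin(ω(α+β)) sinh((k²σ²/(2λ)) e^{−λ(α+β)}) dα ]. Then ∫₀^∞ M(β; λ) dβ → 2u²kω / (k⁴σ⁴ + 4ω²) as λ → ∞. -/

import Mathlib

open MeasureTheory Real Set

/-- The paper's leading-order Stokes'-drift kernel `M(β)` for the elastic dumbbell,
with wave amplitude `u`, wavenumber `k`, frequency `ω`, noise strength `σ`,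
and spring constant `l` (the paper's `λ`). -/
noncomputable def stokesKernel (u k ω σ l β : ℝ) : ℝ :=
  (1 / 2) * u ^ 2 * k *
    (Real.sin (ω * β) *
        Real.exp (-(k ^ 2 * σ ^ 2 / 2) * (β + l⁻¹ * (1 - Real.exp (-(l * β))))) -
      l * ∫ α in Ioi (0 : ℝ),
        Real.exp (-(l * α) - k ^ 2 * σ ^ 2 / 2 * (α + β + l⁻¹)) * Real.sin (ω * (α + β)) *
          Real.sinh (k ^ 2 * σ ^ 2 / (2 * l) * Real.exp (-(l * (α + β)))))

open Filter



lemma aux_sinh_exp_le {x : ℝ} (hx : 0 ≤ x) : Real.sinh x * Real.exp (-x) ≤ x := by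
  have h : Real.sinh x * Real.exp (-x) = (1 - Real.exp (-(2*x))) / 2 := by
    rw [Real.sinh_eq]
    have e1 : Real.exp x * Real.exp (-x) = 1 := by rw [← Real.exp_add]; simp
    have e2 : Real.exp (-x) * Real.exp (-x) = Real.exp (-(2*x)) := by
      rw [← Real.exp_add]; ring_nf
    linear_combination e1 / 2 - e2 / 2
  rw [h]
  have := Real.add_one_le_exp (-(2*x))
  linarith

lemma aux_integral_exp_neg_mul {l : ℝ} (hl : 0 < l) :
    ∫ α in Ioi (0:ℝ), Real.exp (-(l * α)) = 1 / l := by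
  have key : ∫ α in Ioi (0:ℝ), Real.exp (-l * α) = 1 / l := by
    have := integral_Ioi_of_hasDerivAt_of_tendsto (f := fun x => -Real.exp (-l * x) / l)
      (f' := fun x => Real.exp (-l * x)) (a := 0) (m := 0) ?_ ?_ ?_ ?_
    · rw [this]; field_simp; simp
    · exact (Continuous.continuousWithinAt (by continuity))
    · intro x _
      have h1 : HasDerivAt (fun x : ℝ => -l * x) (-l) x := by
        simpa using (hasDerivAt_id x).const_mul (-l)
      have h2 := (h1.exp.neg).div_const l
      refine h2.congr_deriv ?_
      rw [div_eq_iff hl.ne']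
      ring
    · exact exp_neg_integrableOn_Ioi 0 hl
    · have : Tendsto (fun x : ℝ => Real.exp (-l * x)) atTop (nhds 0) :=
        Real.tendsto_exp_atBot.comp (tendsto_id.const_mul_atTop_of_neg (by linarith))
      simpa using (this.neg.div_const l)
  rw [← key]
  congr 1; ext α; ring_nf

lemma aux_integral_sin_exp {a ω : ℝ} (ha : 0 < a) (hω : 0 < ω) :
    ∫ β in Ioi (0:ℝ), Real.sin (ω * β) * Real.exp (-(a * β)) = ω / (a ^ 2 + ω ^ 2) := by
  set F : ℝ → ℝ := fun β =>
    -Real.exp (-(a * β)) * (a * Real.sin (ω * β) + ω * Real.cos (ω * β)) / (a ^ 2 + ω ^ 2)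
    with hF
  have hd : ∀ x : ℝ, HasDerivAt F (Real.sin (ω * x) * Real.exp (-(a * x))) x := by
    intro x
    have he : HasDerivAt (fun x : ℝ => Real.exp (-(a * x))) (-a * Real.exp (-(a * x))) x := by
      have h1 : HasDerivAt (fun x : ℝ => -(a * x)) (-a) x := by
        simpa using ((hasDerivAt_id x).const_mul (-a))
      simpa [mul_comm] using h1.exp
    have hs : HasDerivAt (fun x : ℝ => Real.sin (ω * x)) (ω * Real.cos (ω * x)) x := by
      have h1 : HasDerivAt (fun x : ℝ => ω * x) ω x := by
        simpa using (hasDerivAt_id x).const_mul ω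
      simpa [mul_comm] using h1.sin
    have hc : HasDerivAt (fun x : ℝ => Real.cos (ω * x)) (-(ω * Real.sin (ω * x))) x := by
      have h1 : HasDerivAt (fun x : ℝ => ω * x) ω x := by
        simpa using (hasDerivAt_id x).const_mul ω
      simpa [mul_comm] using h1.cos
    have hcombo : HasDerivAt (fun x : ℝ => a * Real.sin (ω * x) + ω * Real.cos (ω * x))
        (a * (ω * Real.cos (ω * x)) + ω * (-(ω * Real.sin (ω * x)))) x :=
      ((hs.const_mul a).add (hc.const_mul ω))
    have := ((he.neg.mul hcombo).div_const (a ^ 2 + ω ^ 2))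
    refine this.congr_deriv ?_
    have hne : a ^ 2 + ω ^ 2 ≠ 0 := by positivity
    rw [div_eq_iff hne, Pi.neg_apply]
    ring
  have hint : IntegrableOn (fun β : ℝ => Real.sin (ω * β) * Real.exp (-(a * β))) (Ioi 0) := by
    apply Integrable.mono' (exp_neg_integrableOn_Ioi 0 ha)
    · exact (Continuous.aestronglyMeasurable (by continuity))
    · filter_upwards with x
      rw [norm_mul, Real.norm_eq_abs, Real.norm_eq_abs, Real.abs_exp, neg_mul]
      nlinarith [abs_sin_le_one (ω * x), Real.exp_pos (-(a*x)), abs_nonneg (Real.sin (ω*x))]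
  have hlim : Tendsto F atTop (nhds 0) := by
    apply squeeze_zero_norm (a := fun x => Real.exp (-(a * x)) * (a + ω) / (a ^ 2 + ω ^ 2))
    · intro x
      rw [hF]
      simp only [norm_div, norm_mul, norm_neg, Real.norm_eq_abs, Real.abs_exp]
      rw [abs_of_pos (by positivity : (0:ℝ) < a ^ 2 + ω ^ 2)]
      apply div_le_div_of_nonneg_right _ (by positivity)
      apply mul_le_mul_of_nonneg_left _ (Real.exp_pos _).le
      calc |a * Real.sin (ω * x) + ω * Real.cos (ω * x)|
          ≤ |a * Real.sin (ω * x)| + |ω * Real.cos (ω * x)| := abs_add_le _ _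
        _ ≤ a + ω := by
            rw [abs_mul, abs_mul, abs_of_pos ha, abs_of_pos hω]
            nlinarith [abs_sin_le_one (ω * x), abs_cos_le_one (ω * x)]
    · have h0 : Tendsto (fun x : ℝ => Real.exp (-a * x)) atTop (nhds 0) :=
        Real.tendsto_exp_atBot.comp (tendsto_id.const_mul_atTop_of_neg (by linarith))
      simpa [neg_mul] using (h0.mul_const (a + ω)).div_const (a ^ 2 + ω ^ 2)
  have := integral_Ioi_of_hasDerivAt_of_tendsto (f := F)
    (f' := fun β => Real.sin (ω * β) * Real.exp (-(a * β))) (a := 0) (m := 0)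
    (hd 0).continuousAt.continuousWithinAt (fun x _ => hd x) hint hlim
  rw [this, hF]
  simp
  field_simp

lemma aux_inner_abs_le {k σ ω l β : ℝ} (hk : 0 < k) (hσ : 0 < σ) (hl : 0 < l) (hβ : 0 ≤ β) :
    |∫ α in Ioi (0:ℝ),
        Real.exp (-(l * α) - k ^ 2 * σ ^ 2 / 2 * (α + β + l⁻¹)) * Real.sin (ω * (α + β)) *
          Real.sinh (k ^ 2 * σ ^ 2 / (2 * l) * Real.exp (-(l * (α + β))))| ≤
      k ^ 2 * σ ^ 2 / 2 / l ^ 2 * Real.exp (-(k ^ 2 * σ ^ 2 / 2 * β)) := by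
  set a : ℝ := k ^ 2 * σ ^ 2 / 2 with ha_def
  have ha : 0 < a := by positivity
  have hal : k ^ 2 * σ ^ 2 / (2 * l) = a / l := by rw [ha_def, div_div]
  set g : ℝ → ℝ := fun α =>
    Real.exp (-(l * α) - a * (α + β + l⁻¹)) * Real.sin (ω * (α + β)) *
      Real.sinh (k ^ 2 * σ ^ 2 / (2 * l) * Real.exp (-(l * (α + β)))) with hg_def
  have hbi : IntegrableOn (fun α : ℝ => Real.exp (-(l * α))) (Ioi 0) := by
    simpa [neg_mul] using exp_neg_integrableOn_Ioi 0 hl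
  have key : ∀ α ∈ Ioi (0:ℝ), ‖g α‖ ≤ a / l * Real.exp (-(a * β)) * Real.exp (-(l * α)) := by
    intro α hα
    have hα' : (0:ℝ) ≤ α := le_of_lt hα
    have hs0 : 0 ≤ a / l * Real.exp (-(l * (α + β))) := by positivity
    have hs1 : a / l * Real.exp (-(l * (α + β))) ≤ a / l := by
      have h : Real.exp (-(l * (α + β))) ≤ 1 := by
        rw [Real.exp_le_one_iff]; nlinarith
      nlinarith [div_pos ha hl]
    have hE : Real.exp (-(l * α) - a * (α + β + l⁻¹)) =
        Real.exp (-(l * α)) * Real.exp (-(a * α)) * Real.exp (-(a * β)) *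
          Real.exp (-(a / l)) := by
      rw [← Real.exp_add, ← Real.exp_add, ← Real.exp_add]
      congr 1
      field_simp
      ring
    have hsinh : |Real.sinh (k ^ 2 * σ ^ 2 / (2 * l) * Real.exp (-(l * (α + β))))| ≤
        Real.sinh (a / l) := by
      rw [hal, abs_of_nonneg (Real.sinh_nonneg_iff.mpr hs0)]
      exact Real.sinh_le_sinh.mpr hs1
    calc ‖g α‖ = Real.exp (-(l * α) - a * (α + β + l⁻¹)) * |Real.sin (ω * (α + β))| *
          |Real.sinh (k ^ 2 * σ ^ 2 / (2 * l) * Real.exp (-(l * (α + β))))| := by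
          rw [hg_def]
          simp [abs_mul, Real.abs_exp]
      _ ≤ Real.exp (-(l * α) - a * (α + β + l⁻¹)) * 1 * Real.sinh (a / l) := by
          gcongr
          · exact abs_sin_le_one _
      _ = Real.exp (-(l * α)) * Real.exp (-(a * α)) * Real.exp (-(a * β)) *
            (Real.sinh (a / l) * Real.exp (-(a / l))) := by rw [hE]; ring
      _ ≤ Real.exp (-(l * α)) * 1 * Real.exp (-(a * β)) * (a / l) := by
          gcongr
          · exact Real.exp_le_one_iff.mpr (by nlinarith)
          · exact aux_sinh_exp_le (by positivity)
      _ = a / l * Real.exp (-(a * β)) * Real.exp (-(l * α)) := by ring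
  calc |∫ α in Ioi (0:ℝ), g α| = ‖∫ α in Ioi (0:ℝ), g α‖ := (Real.norm_eq_abs _).symm
    _ ≤ ∫ α in Ioi (0:ℝ), ‖g α‖ := norm_integral_le_integral_norm g
    _ ≤ ∫ α in Ioi (0:ℝ), a / l * Real.exp (-(a * β)) * Real.exp (-(l * α)) := by
        refine integral_mono_of_nonneg (Eventually.of_forall fun α => norm_nonneg _)
          (hbi.const_mul _) ?_
        filter_upwards [ae_restrict_mem measurableSet_Ioi] with α hα
        exact key α hα
    _ = a / l * Real.exp (-(a * β)) * (1 / l) := by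
        rw [MeasureTheory.integral_const_mul, aux_integral_exp_neg_mul hl]
    _ = a / l ^ 2 * Real.exp (-(a * β)) := by ring

lemma aux_meas (u k ω σ l : ℝ) :
    AEStronglyMeasurable (fun β => stokesKernel u k ω σ l β) (volume.restrict (Ioi 0)) := by
  have hF : Continuous (fun p : ℝ × ℝ =>
      Real.exp (-(l * p.2) - k ^ 2 * σ ^ 2 / 2 * (p.2 + p.1 + l⁻¹)) *
        Real.sin (ω * (p.2 + p.1)) *
          Real.sinh (k ^ 2 * σ ^ 2 / (2 * l) * Real.exp (-(l * (p.2 + p.1))))) := by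
    fun_prop
  have hG : StronglyMeasurable (fun β : ℝ => ∫ α in Ioi (0:ℝ),
      Real.exp (-(l * α) - k ^ 2 * σ ^ 2 / 2 * (α + β + l⁻¹)) * Real.sin (ω * (α + β)) *
        Real.sinh (k ^ 2 * σ ^ 2 / (2 * l) * Real.exp (-(l * (α + β))))) :=
    hF.stronglyMeasurable.integral_prod_right'
  have h1 : StronglyMeasurable (fun β : ℝ => Real.sin (ω * β) *
      Real.exp (-(k ^ 2 * σ ^ 2 / 2) * (β + l⁻¹ * (1 - Real.exp (-(l * β)))))) :=
    (Continuous.stronglyMeasurable (by fun_prop))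
  simp only [stokesKernel]
  exact ((stronglyMeasurable_const.mul
    (h1.sub (stronglyMeasurable_const.mul hG)))).aestronglyMeasurable

lemma aux_kernel_tendsto {u k ω σ β : ℝ} (hk : 0 < k) (hω : 0 < ω) (hσ : 0 < σ)
    (hβ : 0 < β) :
    Tendsto (fun l : ℝ => stokesKernel u k ω σ l β) atTop
      (nhds ((1 / 2) * u ^ 2 * k *
        (Real.sin (ω * β) * Real.exp (-(k ^ 2 * σ ^ 2 / 2 * β))))) := by
  set a : ℝ := k ^ 2 * σ ^ 2 / 2 with ha_def
  have ha : 0 < a := by positivity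
  simp only [stokesKernel]
  apply Filter.Tendsto.const_mul
  have h0 : Tendsto (fun l : ℝ => l⁻¹ * (1 - Real.exp (-(l * β)))) atTop (nhds 0) := by
    apply squeeze_zero_norm' (a := fun l : ℝ => l⁻¹) _ tendsto_inv_atTop_zero
    filter_upwards [eventually_gt_atTop (0:ℝ)] with l hl
    rw [norm_mul, Real.norm_eq_abs, Real.norm_eq_abs, abs_of_pos (inv_pos.mpr hl)]
    have he1 : Real.exp (-(l * β)) ≤ 1 := Real.exp_le_one_iff.mpr (by nlinarith)
    have he2 : 0 < Real.exp (-(l * β)) := Real.exp_pos _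
    rw [abs_of_nonneg (by linarith)]
    nlinarith [inv_pos.mpr hl]
  have hinner : Tendsto (fun l : ℝ => β + l⁻¹ * (1 - Real.exp (-(l * β)))) atTop
      (nhds β) := by
    simpa using (tendsto_const_nhds (α := ℝ) (x := β)).add h0
  have he : Tendsto (fun l : ℝ =>
      Real.exp (-a * (β + l⁻¹ * (1 - Real.exp (-(l * β)))))) atTop
      (nhds (Real.exp (-a * β))) :=
    (Real.continuous_exp.tendsto _).comp (hinner.const_mul (-a))
  have h1 : Tendsto (fun l : ℝ => Real.sin (ω * β) *
      Real.exp (-a * (β + l⁻¹ * (1 - Real.exp (-(l * β)))))) atTop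
      (nhds (Real.sin (ω * β) * Real.exp (-(a * β)))) := by
    rw [← neg_mul]
    exact he.const_mul _
  have h2 : Tendsto (fun l : ℝ => l * ∫ α in Ioi (0:ℝ),
      Real.exp (-(l * α) - a * (α + β + l⁻¹)) * Real.sin (ω * (α + β)) *
        Real.sinh (k ^ 2 * σ ^ 2 / (2 * l) * Real.exp (-(l * (α + β))))) atTop
      (nhds 0) := by
    apply squeeze_zero_norm'
      (a := fun l : ℝ => a * Real.exp (-(a * β)) * l⁻¹)
    · filter_upwards [eventually_gt_atTop (0:ℝ)] with l hl
      have hb := aux_inner_abs_le (ω := ω) (l := l) (β := β) hk hσ hl hβ.le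
      rw [norm_mul, Real.norm_eq_abs, Real.norm_eq_abs, abs_of_pos hl]
      calc l * |∫ α in Ioi (0:ℝ),
            Real.exp (-(l * α) - a * (α + β + l⁻¹)) * Real.sin (ω * (α + β)) *
              Real.sinh (k ^ 2 * σ ^ 2 / (2 * l) * Real.exp (-(l * (α + β))))|
          ≤ l * (a / l ^ 2 * Real.exp (-(a * β))) :=
            mul_le_mul_of_nonneg_left hb hl.le
        _ = a * Real.exp (-(a * β)) * l⁻¹ := by field_simp
    · simpa using tendsto_inv_atTop_zero.const_mul (a * Real.exp (-(a * β)))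
  simpa using h1.sub h2

/-- Strong-spring asymptotics of the leading-order Stokes' drift of the elastic
dumbbell: the drift integral tends to the point-particle value as the spring
constant tends to infinity. -/
theorem stokesDrift_tendsto_strong_spring (u k ω σ : ℝ)
    (hu : 0 < u) (hk : 0 < k) (hω : 0 < ω) (hσ : 0 < σ) :
    Filter.Tendsto (fun l : ℝ => ∫ β in Ioi (0 : ℝ), stokesKernel u k ω σ l β)
      Filter.atTop
      (nhds (2 * u ^ 2 * k * ω / (k ^ 4 * σ ^ 4 + 4 * ω ^ 2))) := by
  have ha : (0:ℝ) < k ^ 2 * σ ^ 2 / 2 := by positivity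
  have hc : (0:ℝ) < (1 / 2) * u ^ 2 * k := by positivity
  have hbint : Integrable (fun β : ℝ => u ^ 2 * k * Real.exp (-(k ^ 2 * σ ^ 2 / 2 * β)))
      (volume.restrict (Ioi 0)) := by
    apply Integrable.const_mul
    simpa [neg_mul, IntegrableOn] using exp_neg_integrableOn_Ioi 0 ha
  have key := MeasureTheory.tendsto_integral_filter_of_dominated_convergence
    (μ := volume.restrict (Ioi (0:ℝ))) (l := Filter.atTop)
    (F := fun (l : ℝ) (β : ℝ) => stokesKernel u k ω σ l β)
    (f := fun β : ℝ => (1 / 2) * u ^ 2 * k *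
      (Real.sin (ω * β) * Real.exp (-(k ^ 2 * σ ^ 2 / 2 * β))))
    (bound := fun β : ℝ => u ^ 2 * k * Real.exp (-(k ^ 2 * σ ^ 2 / 2 * β)))
    (Filter.Eventually.of_forall fun l => aux_meas u k ω σ l) ?_ hbint ?_
  · have hval : (∫ β in Ioi (0:ℝ), (1 / 2) * u ^ 2 * k *
        (Real.sin (ω * β) * Real.exp (-(k ^ 2 * σ ^ 2 / 2 * β)))) =
        2 * u ^ 2 * k * ω / (k ^ 4 * σ ^ 4 + 4 * ω ^ 2) := by
      rw [MeasureTheory.integral_const_mul, aux_integral_sin_exp ha hω]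
      have d1 : (k ^ 2 * σ ^ 2 / 2) ^ 2 + ω ^ 2 ≠ 0 := by positivity
      have d2 : k ^ 4 * σ ^ 4 + 4 * ω ^ 2 ≠ 0 := by positivity
      field_simp
      ring
    rw [hval] at key
    exact key
  · -- domination
    filter_upwards [Filter.eventually_ge_atTop (max (k ^ 2 * σ ^ 2 / 2) 1)] with l hl
    have hla : k ^ 2 * σ ^ 2 / 2 ≤ l := le_trans (le_max_left _ _) hl
    have hl1 : (1:ℝ) ≤ l := le_trans (le_max_right _ _) hl
    have hl0 : (0:ℝ) < l := lt_of_lt_of_le one_pos hl1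
    filter_upwards [ae_restrict_mem measurableSet_Ioi] with β hβ
    have hβ0 : (0:ℝ) < β := hβ
    simp only [stokesKernel]
    rw [Real.norm_eq_abs, abs_mul, abs_of_pos hc]
    have hT1 : |Real.sin (ω * β) *
        Real.exp (-(k ^ 2 * σ ^ 2 / 2) * (β + l⁻¹ * (1 - Real.exp (-(l * β)))))| ≤
        Real.exp (-(k ^ 2 * σ ^ 2 / 2 * β)) := by
      rw [abs_mul, Real.abs_exp]
      have hx : 0 ≤ l⁻¹ * (1 - Real.exp (-(l * β))) := by
        have h1 : Real.exp (-(l * β)) ≤ 1 := Real.exp_le_one_iff.mpr (by nlinarith)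
        have h2 : 0 < l⁻¹ := inv_pos.mpr hl0
        nlinarith
      have hee : Real.exp (-(k ^ 2 * σ ^ 2 / 2) * (β + l⁻¹ * (1 - Real.exp (-(l * β))))) ≤
          Real.exp (-(k ^ 2 * σ ^ 2 / 2 * β)) := Real.exp_le_exp.mpr (by nlinarith)
      calc |Real.sin (ω * β)| *
            Real.exp (-(k ^ 2 * σ ^ 2 / 2) * (β + l⁻¹ * (1 - Real.exp (-(l * β))))) ≤
          1 * Real.exp (-(k ^ 2 * σ ^ 2 / 2 * β)) :=
            mul_le_mul (abs_sin_le_one _) hee (Real.exp_pos _).le one_pos.le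
        _ = Real.exp (-(k ^ 2 * σ ^ 2 / 2 * β)) := one_mul _
    have hT2 : |l * ∫ α in Ioi (0:ℝ),
        Real.exp (-(l * α) - k ^ 2 * σ ^ 2 / 2 * (α + β + l⁻¹)) * Real.sin (ω * (α + β)) *
          Real.sinh (k ^ 2 * σ ^ 2 / (2 * l) * Real.exp (-(l * (α + β))))| ≤
        Real.exp (-(k ^ 2 * σ ^ 2 / 2 * β)) := by
      rw [abs_mul, abs_of_pos hl0]
      have hb := aux_inner_abs_le (ω := ω) (l := l) (β := β) hk hσ hl0 hβ0.le
      calc l * |∫ α in Ioi (0:ℝ),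
            Real.exp (-(l * α) - k ^ 2 * σ ^ 2 / 2 * (α + β + l⁻¹)) * Real.sin (ω * (α + β)) *
              Real.sinh (k ^ 2 * σ ^ 2 / (2 * l) * Real.exp (-(l * (α + β))))| ≤
          l * (k ^ 2 * σ ^ 2 / 2 / l ^ 2 * Real.exp (-(k ^ 2 * σ ^ 2 / 2 * β))) :=
            mul_le_mul_of_nonneg_left hb hl0.le
        _ = k ^ 2 * σ ^ 2 / 2 / l * Real.exp (-(k ^ 2 * σ ^ 2 / 2 * β)) := by
            field_simp
        _ ≤ Real.exp (-(k ^ 2 * σ ^ 2 / 2 * β)) := by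
            apply mul_le_of_le_one_left (Real.exp_pos _).le
            rw [div_le_one hl0]
            exact hla
    calc (1 / 2) * u ^ 2 * k * |Real.sin (ω * β) *
            Real.exp (-(k ^ 2 * σ ^ 2 / 2) * (β + l⁻¹ * (1 - Real.exp (-(l * β))))) -
          l * ∫ α in Ioi (0:ℝ),
            Real.exp (-(l * α) - k ^ 2 * σ ^ 2 / 2 * (α + β + l⁻¹)) * Real.sin (ω * (α + β)) *
              Real.sinh (k ^ 2 * σ ^ 2 / (2 * l) * Real.exp (-(l * (α + β))))| ≤
        (1 / 2) * u ^ 2 * k * (2 * Real.exp (-(k ^ 2 * σ ^ 2 / 2 * β))) := by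
          apply mul_le_mul_of_nonneg_left _ hc.le
          calc |Real.sin (ω * β) *
                Real.exp (-(k ^ 2 * σ ^ 2 / 2) * (β + l⁻¹ * (1 - Real.exp (-(l * β))))) -
              l * ∫ α in Ioi (0:ℝ),
                Real.exp (-(l * α) - k ^ 2 * σ ^ 2 / 2 * (α + β + l⁻¹)) *
                  Real.sin (ω * (α + β)) *
                  Real.sinh (k ^ 2 * σ ^ 2 / (2 * l) * Real.exp (-(l * (α + β))))| ≤
              |Real.sin (ω * β) *
                Real.exp (-(k ^ 2 * σ ^ 2 / 2) * (β + l⁻¹ * (1 - Real.exp (-(l * β)))))| +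
              |l * ∫ α in Ioi (0:ℝ),
                Real.exp (-(l * α) - k ^ 2 * σ ^ 2 / 2 * (α + β + l⁻¹)) *
                  Real.sin (ω * (α + β)) *
                  Real.sinh (k ^ 2 * σ ^ 2 / (2 * l) * Real.exp (-(l * (α + β))))| :=
                abs_sub _ _
            _ ≤ 2 * Real.exp (-(k ^ 2 * σ ^ 2 / 2 * β)) := by linarith
      _ = u ^ 2 * k * Real.exp (-(k ^ 2 * σ ^ 2 / 2 * β)) := by ring
  · -- pointwise limit
    filter_upwards [ae_restrict_mem measurableSet_Ioi] with β hβ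
    exact aux_kernel_tendsto hk hω hσ hβ
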